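/- (Proposition: linear coding over odd characteristic is suboptimal for I1) Let F be a field of characteristic different from 2 and t,r positive integers. If an encoder matrix H ∈ F^{r×10t} with blocks H_1,…,H_10 ∈ F^{r×t} satisfies the decoding condition rank H_{{i}∪B_i} = rank H_{B_i} + t for every user i ∈ {1,…,10} of the instance I1, then r > 6t. Hence no linear index code over F of broadcast rate 6 exists for I1. -/

import Mathlib

open Matrix

/-- The rank of the `r × |L|t` matrix formed by horizontally concatenating the
blocks `H l`, `l ∈ L`, of the block encoder matrix `H = [H_1 | ⋯ | H_m]`. -/
noncomputable def blockRank {F : Type} [Field F] {m r t : ℕ}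
    (H : Fin m → Matrix (Fin r) (Fin t) F) (L : Finset (Fin m)) : ℕ :=
  Matrix.rank (Matrix.of fun (k : Fin r) (p : {l // l ∈ L} × Fin t) => H p.1.1 k p.2)

/-- Side-information sets of the 10-user instance `I1` (0-based indexing:
user `i : Fin 10` corresponds to user `i+1` of the paper). -/
def I1sideInfo : Fin 10 → Finset (Fin 10) :=
  ![{3, 5, 6}, {0, 4, 5}, {0, 1, 6}, {1, 2, 5}, {0, 2, 3}, {2, 4, 6}, {1, 3, 4}, ∅, ∅, ∅]

/-- Interfering sets of `I1`: `B_i = {1,…,10} \ (A_i ∪ {i})`. -/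
def I1interf (i : Fin 10) : Finset (Fin 10) :=
  Finset.univ \ insert i (I1sideInfo i)

open Submodule Module

lemma blockRank_eq {F : Type} [Field F] {m r t : ℕ}
    (H : Fin m → Matrix (Fin r) (Fin t) F) (L : Finset (Fin m)) :
    blockRank H L = finrank F ↥(⨆ l ∈ L, Submodule.span F (Set.range (H l)ᵀ)) := by
  have hrng : Set.range (Matrix.of fun (k : Fin r) (p : {l // l ∈ L} × Fin t) => H p.1.1 k p.2)ᵀ
      = ⋃ l : {l // l ∈ L}, Set.range (H l.1)ᵀ := by
    ext v
    constructor
    · rintro ⟨⟨l, j⟩, rfl⟩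
      exact Set.mem_iUnion.2 ⟨l, ⟨j, rfl⟩⟩
    · intro hv
      obtain ⟨l, j, rfl⟩ := Set.mem_iUnion.1 hv
      exact ⟨⟨l, j⟩, rfl⟩
  rw [blockRank, Matrix.rank_eq_finrank_span_cols,
    show Set.range (Matrix.of fun (k : Fin r) (p : {l // l ∈ L} × Fin t) => H p.1.1 k p.2).col
      = ⋃ l : {l // l ∈ L}, Set.range (H l.1)ᵀ from hrng, Submodule.span_iUnion, iSup_subtype]

/-- The abstract core: seven subspaces arranged according to the Fano plane inside an
ambient space of dimension at most `6t` (together with three extra independent blocks)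
cannot satisfy all decoding conditions of `I1` unless the characteristic is `2`. -/
lemma I1main {F V : Type} [Field F] [AddCommGroup V] [Module F V] [FiniteDimensional F V]
    (hF : ringChar F ≠ 2) {t : ℕ} (ht : 0 < t)
    (U : Fin 10 → Submodule F V)
    (hUle : ∀ i, finrank F ↥(U i) ≤ t)
    (hkey : ∀ i, finrank F ↥(U i ⊔ ⨆ l ∈ I1interf i, U l)
      = finrank F ↥(⨆ l ∈ I1interf i, U l) + t)
    (hV : finrank F V ≤ 6 * t) : False := by
  have hsupinf : ∀ p q : Submodule F V,
      finrank F ↥(p ⊔ q) + finrank F ↥(p ⊓ q) = finrank F ↥p + finrank F ↥q :=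
    fun p q => Submodule.finrank_sup_add_finrank_inf_eq p q
  have hrk : ∀ i, finrank F ↥(U i) = t := by
    intro i
    have h1 := hkey i
    have h2 := hsupinf (U i) (⨆ l ∈ I1interf i, U l)
    have h3 := hUle i
    omega
  have hmeet : ∀ i, U i ⊓ (⨆ l ∈ I1interf i, U l) = ⊥ := by
    intro i
    have h1 := hkey i
    have h2 := hsupinf (U i) (⨆ l ∈ I1interf i, U l)
    have h3 := hUle i
    have h4 : finrank F ↥(U i ⊓ ⨆ l ∈ I1interf i, U l) = 0 := by omega
    exact Submodule.finrank_eq_zero.mp h4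
  have hmeet' : ∀ (i : Fin 10) (p : Submodule F V),
      p ≤ (⨆ l ∈ I1interf i, U l) → U i ⊓ p = ⊥ := by
    intro i p hp
    exact eq_bot_iff.mpr ((inf_le_inf_left (U i) hp).trans (hmeet i).le)
  have leQ : ∀ (c : Fin 10) (L : Finset (Fin 10)), c ∈ L → U c ≤ ⨆ l ∈ L, U l :=
    fun c L hc => le_iSup₂ (f := fun l (_ : l ∈ L) => U l) c hc
  have pear : ∀ x y : Fin 10, y ∈ I1interf x → U x ⊓ U y = ⊥ :=
    fun x y hy => hmeet' x (U y) (leQ y _ hy)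
  have rk_sup : ∀ p q : Submodule F V, p ⊓ q = ⊥ →
      finrank F ↥(p ⊔ q) = finrank F ↥p + finrank F ↥q := by
    intro p q h
    have h2 := hsupinf p q
    rw [h, finrank_bot] at h2
    omega
  have hfr_le : ∀ p : Submodule F V, finrank F ↥p ≤ 6 * t :=
    fun p => le_trans (Submodule.finrank_le p) hV
  -- the chain using users 7, 8, 9 (which have empty side information)
  have hB9 : I1interf (9 : Fin 10) = ({0,1,2,3,4,5,6,7,8} : Finset (Fin 10)) := by decide
  have hkey9 := hkey 9
  rw [hB9] at hkey9
  have e98 : (⨆ l ∈ ({0,1,2,3,4,5,6,7,8} : Finset (Fin 10)), U l)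
      = U 8 ⊔ ⨆ l ∈ ({0,1,2,3,4,5,6,7} : Finset (Fin 10)), U l := by
    rw [show ({0,1,2,3,4,5,6,7,8} : Finset (Fin 10))
        = insert 8 ({0,1,2,3,4,5,6,7}) from by decide, Finset.iSup_insert]
  have e87 : (⨆ l ∈ ({0,1,2,3,4,5,6,7} : Finset (Fin 10)), U l)
      = U 7 ⊔ ⨆ l ∈ ({0,1,2,3,4,5,6} : Finset (Fin 10)), U l := by
    rw [show ({0,1,2,3,4,5,6,7} : Finset (Fin 10))
        = insert 7 ({0,1,2,3,4,5,6}) from by decide, Finset.iSup_insert]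
  have m8 : U 8 ⊓ (⨆ l ∈ ({0,1,2,3,4,5,6,7} : Finset (Fin 10)), U l) = ⊥ :=
    hmeet' 8 _ (biSup_mono (by decide))
  have m7 : U 7 ⊓ (⨆ l ∈ ({0,1,2,3,4,5,6} : Finset (Fin 10)), U l) = ⊥ :=
    hmeet' 7 _ (biSup_mono (by decide))
  have n98 : finrank F ↥(⨆ l ∈ ({0,1,2,3,4,5,6,7,8} : Finset (Fin 10)), U l)
      = finrank F ↥(⨆ l ∈ ({0,1,2,3,4,5,6,7} : Finset (Fin 10)), U l) + t := by
    rw [e98, rk_sup _ _ m8, hrk 8, Nat.add_comm]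
  have n87 : finrank F ↥(⨆ l ∈ ({0,1,2,3,4,5,6,7} : Finset (Fin 10)), U l)
      = finrank F ↥(⨆ l ∈ ({0,1,2,3,4,5,6} : Finset (Fin 10)), U l) + t := by
    rw [e87, rk_sup _ _ m7, hrk 7, Nat.add_comm]
  have hS7le : finrank F ↥(⨆ l ∈ ({0,1,2,3,4,5,6} : Finset (Fin 10)), U l) + 3*t ≤ 6*t := by
    have h0 := hfr_le (U 9 ⊔ ⨆ l ∈ ({0,1,2,3,4,5,6,7,8} : Finset (Fin 10)), U l)
    omega
  -- W := U 7 ⊔ U 8 ⊔ U 9 has rank exactly 3t and intersects the span of the first seven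
  -- blocks trivially
  have hWle : finrank F ↥(⨆ l ∈ ({7,8,9} : Finset (Fin 10)), U l) ≤ 3*t := by
    have hW : (⨆ l ∈ ({7,8,9} : Finset (Fin 10)), U l) = U 7 ⊔ (U 8 ⊔ U 9) := by
      simp only [Finset.iSup_insert, Finset.iSup_singleton]
    rw [hW]
    have a1 := Submodule.finrank_add_le_finrank_add_finrank (U 7) (U 8 ⊔ U 9)
    have a2 := Submodule.finrank_add_le_finrank_add_finrank (U 8) (U 9)
    have b7 := hrk 7; have b8 := hrk 8; have b9 := hrk 9
    omega
  have efull : (⨆ l ∈ ({0,1,2,3,4,5,6,7,8,9} : Finset (Fin 10)), U l)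
      = (⨆ l ∈ ({0,1,2,3,4,5,6} : Finset (Fin 10)), U l)
        ⊔ (⨆ l ∈ ({7,8,9} : Finset (Fin 10)), U l) := by
    rw [show ({0,1,2,3,4,5,6,7,8,9} : Finset (Fin 10))
        = ({0,1,2,3,4,5,6} : Finset (Fin 10)) ∪ ({7,8,9} : Finset (Fin 10)) from by decide,
      Finset.iSup_union]
  have efull9 : (⨆ l ∈ ({0,1,2,3,4,5,6,7,8,9} : Finset (Fin 10)), U l)
      = U 9 ⊔ ⨆ l ∈ ({0,1,2,3,4,5,6,7,8} : Finset (Fin 10)), U l := by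
    rw [show ({0,1,2,3,4,5,6,7,8,9} : Finset (Fin 10))
        = insert 9 ({0,1,2,3,4,5,6,7,8}) from by decide, Finset.iSup_insert]
  have hfull_eq : finrank F ↥(⨆ l ∈ ({0,1,2,3,4,5,6,7,8,9} : Finset (Fin 10)), U l)
      = finrank F ↥(⨆ l ∈ ({0,1,2,3,4,5,6} : Finset (Fin 10)), U l) + 3*t := by
    rw [efull9]
    omega
  have hSW := hsupinf (⨆ l ∈ ({0,1,2,3,4,5,6} : Finset (Fin 10)), U l)
    (⨆ l ∈ ({7,8,9} : Finset (Fin 10)), U l)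
  rw [← efull] at hSW
  have hSWrank0 : finrank F ↥((⨆ l ∈ ({0,1,2,3,4,5,6} : Finset (Fin 10)), U l)
      ⊓ (⨆ l ∈ ({7,8,9} : Finset (Fin 10)), U l)) = 0 := by omega
  have hnW : finrank F ↥(⨆ l ∈ ({7,8,9} : Finset (Fin 10)), U l) = 3*t := by omega
  have hSWbot : (⨆ l ∈ ({0,1,2,3,4,5,6} : Finset (Fin 10)), U l)
      ⊓ (⨆ l ∈ ({7,8,9} : Finset (Fin 10)), U l) = ⊥ :=
    Submodule.finrank_eq_zero.mp hSWrank0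
  -- each Fano line spans exactly the `2t`-dimensional span of any two of its points
  have lineEq : ∀ (j a b : Fin 10) (L : Finset (Fin 10)),
      I1interf j = L ∪ ({7,8,9} : Finset (Fin 10)) →
      (∀ x, x ∈ L → x ∈ ({0,1,2,3,4,5,6} : Finset (Fin 10))) →
      a ∈ L → b ∈ L → U a ⊓ U b = ⊥ →
      U a ⊔ U b = ⨆ l ∈ L, U l := by
    intro j a b L hBj hLsub ha hb hab
    have hLS : (⨆ l ∈ L, U l) ≤ ⨆ l ∈ ({0,1,2,3,4,5,6} : Finset (Fin 10)), U l :=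
      biSup_mono hLsub
    have hLW : (⨆ l ∈ L, U l) ⊓ (⨆ l ∈ ({7,8,9} : Finset (Fin 10)), U l) = ⊥ :=
      eq_bot_iff.mpr ((inf_le_inf_right _ hLS).trans hSWbot.le)
    have hkeyj := hkey j
    rw [hBj, Finset.iSup_union] at hkeyj
    have h6 := hfr_le (U j ⊔ ((⨆ l ∈ L, U l) ⊔ (⨆ l ∈ ({7,8,9} : Finset (Fin 10)), U l)))
    have h5 := rk_sup _ _ hLW
    have hnL : finrank F ↥(⨆ l ∈ L, U l) ≤ 2*t := by omega
    have hab2 : finrank F ↥(U a ⊔ U b) = 2*t := by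
      rw [rk_sup _ _ hab, hrk a, hrk b]; omega
    exact Submodule.eq_of_le_of_finrank_le (sup_le (leQ a _ ha) (leQ b _ hb)) (by omega)
  -- the seven line relations
  have E5 : U 0 ⊔ U 1 = ⨆ l ∈ ({0,1,3} : Finset (Fin 10)), U l :=
    lineEq 5 0 1 _ (by decide) (by decide) (by decide) (by decide) (pear 0 1 (by decide))
  have E0 : U 1 ⊔ U 2 = ⨆ l ∈ ({1,2,4} : Finset (Fin 10)), U l :=
    lineEq 0 1 2 _ (by decide) (by decide) (by decide) (by decide) (pear 1 2 (by decide))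
  have E6 : U 0 ⊔ U 2 = ⨆ l ∈ ({0,2,5} : Finset (Fin 10)), U l :=
    lineEq 6 0 2 _ (by decide) (by decide) (by decide) (by decide) (pear 0 2 (by decide))
  have E2 : U 3 ⊔ U 4 = ⨆ l ∈ ({3,4,5} : Finset (Fin 10)), U l :=
    lineEq 2 3 4 _ (by decide) (by decide) (by decide) (by decide) (pear 3 4 (by decide))
  have E3 : U 0 ⊔ U 4 = ⨆ l ∈ ({0,4,6} : Finset (Fin 10)), U l :=
    lineEq 3 0 4 _ (by decide) (by decide) (by decide) (by decide) (pear 0 4 (by decide))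
  have E1 : U 2 ⊔ U 3 = ⨆ l ∈ ({2,3,6} : Finset (Fin 10)), U l :=
    lineEq 1 2 3 _ (by decide) (by decide) (by decide) (by decide) (pear 2 3 (by decide))
  have m15 : U 1 ⊓ U 5 = ⊥ := by
    have h := pear 5 1 (by decide); rwa [inf_comm] at h
  have E4 : U 1 ⊔ U 5 = ⨆ l ∈ ({1,5,6} : Finset (Fin 10)), U l :=
    lineEq 4 1 5 _ (by decide) (by decide) (by decide) (by decide) m15
  have i3 : U 3 ≤ U 0 ⊔ U 1 := le_trans (leQ 3 _ (by decide)) E5.ge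
  have i4 : U 4 ≤ U 1 ⊔ U 2 := le_trans (leQ 4 _ (by decide)) E0.ge
  have i5 : U 5 ≤ U 0 ⊔ U 2 := le_trans (leQ 5 _ (by decide)) E6.ge
  have i54 : U 5 ≤ U 3 ⊔ U 4 := le_trans (leQ 5 _ (by decide)) E2.ge
  have i64 : U 6 ≤ U 0 ⊔ U 4 := le_trans (leQ 6 _ (by decide)) E3.ge
  have i63 : U 6 ≤ U 2 ⊔ U 3 := le_trans (leQ 6 _ (by decide)) E1.ge
  have i65 : U 6 ≤ U 1 ⊔ U 5 := le_trans (leQ 6 _ (by decide)) E4.ge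
  -- the span of the first seven blocks has rank exactly 3t and equals U 0 ⊔ U 1 ⊔ U 2
  have h01 : finrank F ↥(U 0 ⊔ U 1) = 2*t := by
    rw [rk_sup _ _ (pear 0 1 (by decide)), hrk 0, hrk 1]; omega
  have hm5L : U 5 ⊓ (⨆ l ∈ ({0,1,3} : Finset (Fin 10)), U l) = ⊥ :=
    hmeet' 5 _ (biSup_mono (by decide))
  have h5L : finrank F ↥(U 5 ⊔ ⨆ l ∈ ({0,1,3} : Finset (Fin 10)), U l) = 3*t := by
    rw [rk_sup _ _ hm5L, hrk 5, ← E5, h01]; omega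
  have hup : U 5 ⊔ (⨆ l ∈ ({0,1,3} : Finset (Fin 10)), U l)
      ≤ ⨆ l ∈ ({0,1,2,3,4,5,6} : Finset (Fin 10)), U l :=
    sup_le (leQ 5 _ (by decide)) (biSup_mono (by decide))
  have hS7ge := Submodule.finrank_mono hup
  rw [h5L] at hS7ge
  have hnS : finrank F ↥(⨆ l ∈ ({0,1,2,3,4,5,6} : Finset (Fin 10)), U l) = 3*t := by omega
  have hc0 : U 0 ≤ U 0 ⊔ U 1 ⊔ U 2 := le_trans le_sup_left le_sup_left
  have hc1 : U 1 ≤ U 0 ⊔ U 1 ⊔ U 2 := le_trans le_sup_right le_sup_left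
  have hc2 : U 2 ≤ U 0 ⊔ U 1 ⊔ U 2 := le_sup_right
  have hc3 : U 3 ≤ U 0 ⊔ U 1 ⊔ U 2 := i3.trans le_sup_left
  have hc4 : U 4 ≤ U 0 ⊔ U 1 ⊔ U 2 := i4.trans (sup_le hc1 hc2)
  have hc5 : U 5 ≤ U 0 ⊔ U 1 ⊔ U 2 := i5.trans (sup_le hc0 hc2)
  have hc6 : U 6 ≤ U 0 ⊔ U 1 ⊔ U 2 := i64.trans (sup_le hc0 hc4)
  have esev : (⨆ l ∈ ({0,1,2,3,4,5,6} : Finset (Fin 10)), U l)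
      = U 0 ⊔ (U 1 ⊔ (U 2 ⊔ (U 3 ⊔ (U 4 ⊔ (U 5 ⊔ U 6))))) := by
    simp only [Finset.iSup_insert, Finset.iSup_singleton]
  have hPeq : U 0 ⊔ U 1 ⊔ U 2 = ⨆ l ∈ ({0,1,2,3,4,5,6} : Finset (Fin 10)), U l := by
    refine le_antisymm (sup_le (sup_le (leQ 0 _ (by decide)) (leQ 1 _ (by decide)))
      (leQ 2 _ (by decide))) ?_
    rw [esev]
    exact sup_le hc0 (sup_le hc1 (sup_le hc2 (sup_le hc3 (sup_le hc4 (sup_le hc5 hc6)))))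
  have m012 : (U 0 ⊔ U 1) ⊓ U 2 = ⊥ := by
    have h := hsupinf (U 0 ⊔ U 1) (U 2)
    rw [hPeq] at h
    have h2 := hrk 2
    have : finrank F ↥((U 0 ⊔ U 1) ⊓ U 2) = 0 := by omega
    exact Submodule.finrank_eq_zero.mp this
  -- the remaining pairwise disjointness facts
  have m01 : U 0 ⊓ U 1 = ⊥ := pear 0 1 (by decide)
  have m31 : U 3 ⊓ U 1 = ⊥ := by
    have h := pear 1 3 (by decide); rwa [inf_comm] at h
  have m30 : U 3 ⊓ U 0 = ⊥ := pear 3 0 (by decide)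
  have m42 : U 4 ⊓ U 2 = ⊥ := by
    have h := pear 2 4 (by decide); rwa [inf_comm] at h
  have m41 : U 4 ⊓ U 1 = ⊥ := pear 4 1 (by decide)
  -- uniqueness of decompositions in U 0 ⊕ U 1 ⊕ U 2
  have uniq : ∀ a' b' c' a'' b'' c'' : V, a' ∈ U 0 → b' ∈ U 1 → c' ∈ U 2 →
      a'' ∈ U 0 → b'' ∈ U 1 → c'' ∈ U 2 → a' + b' + c' = a'' + b'' + c'' →
      a' = a'' ∧ b' = b'' ∧ c' = c'' := by
    intro a' b' c' a'' b'' c'' h1 h2 h3 h4 h5 h6 heq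
    have key1 : ((a' - a'') + (b' - b'')) - (c'' - c') = (a' + b' + c') - (a'' + b'' + c'') := by
      abel
    rw [heq, sub_self] at key1
    have keyc : (a' - a'') + (b' - b'') = c'' - c' := sub_eq_zero.mp key1
    have hcmem : c'' - c' ∈ (U 0 ⊔ U 1) ⊓ U 2 :=
      ⟨keyc ▸ Submodule.mem_sup.2 ⟨a' - a'', sub_mem h1 h4, b' - b'', sub_mem h2 h5, rfl⟩,
        sub_mem h6 h3⟩
    rw [m012] at hcmem
    have hcc : c' = c'' := (sub_eq_zero.mp ((Submodule.mem_bot F).1 hcmem)).symm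
    have keyc0 : (a' - a'') + (b' - b'') = 0 := by
      rw [keyc, hcc, sub_self]
    have keyb : a' - a'' = b'' - b' := by
      have h7 := add_eq_zero_iff_eq_neg.mp keyc0
      rw [h7, neg_sub]
    have hamem : a' - a'' ∈ U 0 ⊓ U 1 :=
      ⟨sub_mem h1 h4, by rw [keyb]; exact sub_mem h5 h2⟩
    rw [m01] at hamem
    have haa : a' = a'' := sub_eq_zero.mp ((Submodule.mem_bot F).1 hamem)
    have hbb : b' = b'' := by
      have h8 : b'' - b' = 0 := by rw [← keyb, haa, sub_self]
      exact (sub_eq_zero.mp h8).symm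
    exact ⟨haa, hbb, hcc⟩
  -- element chase producing the contradiction
  have h6ne : U 6 ≠ ⊥ := by
    intro h
    have h6 := hrk 6
    rw [h, finrank_bot] at h6
    omega
  obtain ⟨v, hv6, hvne⟩ := (Submodule.ne_bot_iff (U 6)).1 h6ne
  obtain ⟨c, hc, u, hu3, hcu⟩ := Submodule.mem_sup.1 (i63 hv6)
  obtain ⟨a, ha, b, hb, hab⟩ := Submodule.mem_sup.1 (i3 hu3)
  have hv : v = a + b + c := by rw [← hcu, ← hab]; abel
  -- b + c ∈ U 4
  obtain ⟨a', ha', w, hw4, haw⟩ := Submodule.mem_sup.1 (i64 hv6)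
  obtain ⟨b', hb', c', hc', hw⟩ := Submodule.mem_sup.1 (i4 hw4)
  have heq1 : a' + b' + c' = a + b + c := by rw [← hv, ← haw, ← hw]; abel
  obtain ⟨haa1, hbb1, hcc1⟩ := uniq a' b' c' a b c ha' hb' hc' ha hb hc heq1
  have hbc4 : b + c ∈ U 4 := by
    rw [← hbb1, ← hcc1, hw]; exact hw4
  -- a + c ∈ U 5
  obtain ⟨b'', hb'', w', hw5, hbw⟩ := Submodule.mem_sup.1 (i65 hv6)
  obtain ⟨a'', ha'', c'', hc'', hw'⟩ := Submodule.mem_sup.1 (i5 hw5)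
  have heq2 : a'' + b'' + c'' = a + b + c := by rw [← hv, ← hbw, ← hw']; abel
  obtain ⟨haa2, hbb2, hcc2⟩ := uniq a'' b'' c'' a b c ha'' hb'' hc'' ha hb hc heq2
  have hac5 : a + c ∈ U 5 := by
    rw [← haa2, ← hcc2, hw']; exact hw5
  -- use the line {3,4,5}
  obtain ⟨u', hu'3, w'', hw''4, huw⟩ := Submodule.mem_sup.1 (i54 hac5)
  obtain ⟨p, hp0, q, hq1, hpq⟩ := Submodule.mem_sup.1 (i3 hu'3)
  obtain ⟨s, hs1, z, hz2, hsz⟩ := Submodule.mem_sup.1 (i4 hw''4)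
  have heq3 : p + (q + s) + z = a + 0 + c := by
    rw [add_zero, ← huw, ← hpq, ← hsz]; abel
  obtain ⟨hpa, hqs0, hzc⟩ := uniq p (q + s) z a 0 c hp0 (add_mem hq1 hs1) hz2 ha
    (zero_mem _) hc heq3
  have hqb : q = b := by
    have hmem2 : u' - u ∈ U 1 := by
      rw [← hpq, ← hab, hpa]
      have hrw : a + q - (a + b) = q - b := by abel
      rw [hrw]
      exact sub_mem hq1 hb
    have hm : u' - u ∈ U 3 ⊓ U 1 := ⟨sub_mem hu'3 hu3, hmem2⟩
    rw [m31] at hm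
    have huu : u' = u := sub_eq_zero.mp ((Submodule.mem_bot F).1 hm)
    have : p + q = a + b := by rw [hpq, hab, huu]
    rw [hpa] at this
    exact add_left_cancel this
  have hsb : s = -b := by
    have hbs : b + s = 0 := by rw [← hqb]; exact hqs0
    exact eq_neg_of_add_eq_zero_right hbs
  have hzc2 : z + c = 0 := by
    have hmem2 : w'' + (b + c) ∈ U 2 := by
      rw [← hsz, hsb]
      have hrw : -b + z + (b + c) = z + c := by abel
      rw [hrw]
      exact add_mem hz2 hc
    have hm : w'' + (b + c) ∈ U 4 ⊓ U 2 := ⟨add_mem hw''4 hbc4, hmem2⟩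
    rw [m42] at hm
    have h0 := (Submodule.mem_bot F).1 hm
    have hzw : z + c = w'' + (b + c) := by rw [← hsz, hsb]; abel
    rw [hzw, h0]
  have hc0 : c = 0 := by
    have h2c : c + c = 0 := by rw [hzc] at hzc2; exact hzc2
    have h2c' : (2 : F) • c = 0 := by rw [two_smul]; exact h2c
    rcases smul_eq_zero.mp h2c' with h | h
    · exact absurd h (Ring.two_ne_zero hF)
    · exact h
  have hb0 : b = 0 := by
    have hmem : b ∈ U 4 := by
      have := hbc4; rw [hc0, add_zero] at this; exact this
    have hm : b ∈ U 4 ⊓ U 1 := ⟨hmem, hb⟩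
    rw [m41] at hm
    exact (Submodule.mem_bot F).1 hm
  have ha0 : a = 0 := by
    have hmem : a ∈ U 3 := by
      have h := hu3; rw [← hab, hb0, add_zero] at h; exact h
    have hm : a ∈ U 3 ⊓ U 0 := ⟨hmem, ha⟩
    rw [m30] at hm
    exact (Submodule.mem_bot F).1 hm
  exact hvne (by rw [hv, ha0, hb0, hc0]; simp)

theorem stmt12 {F : Type} [Field F] (hF : ringChar F ≠ 2) (t r : ℕ) (ht : 0 < t) (hr : 0 < r)
    (H : Fin 10 → Matrix (Fin r) (Fin t) F)
    (hdec : ∀ i : Fin 10,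
      blockRank H (insert i (I1interf i)) = blockRank H (I1interf i) + t) :
    6 * t < r := by
  by_contra hlt
  push_neg at hlt
  refine I1main hF ht (fun i => Submodule.span F (Set.range (H i)ᵀ)) ?_ ?_ ?_
  · intro i
    have h : (H i).rank = finrank F ↥(Submodule.span F (Set.range (H i)ᵀ)) :=
      Matrix.rank_eq_finrank_span_cols _
    rw [← h]
    exact Matrix.rank_le_width _
  · intro i
    have h := hdec i
    rw [blockRank_eq, blockRank_eq, Finset.iSup_insert] at h
    exact h
  · have hpi : finrank F (Fin r → F) = r := by
      rw [Module.finrank_pi]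
      exact Fintype.card_fin r
    rw [hpi]
    exact hlt
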